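/- Let A ∈ ℝ^{m×n}, μ > 0, and ν ∈ ℕ, and suppose det(A Aᵀ) > 0. Define λ > 0 by λ² = μ² / det(A Aᵀ)^ν. Then the operator norm of the damped pseudoinverse satisfies ‖Aᵀ (A Aᵀ + λ² I_m)⁻¹‖ ≤ ‖A‖^{ν m} / (2μ). -/

import Mathlib

open Matrix
open scoped Matrix.Norms.L2Operator

section Aux

lemma aux_smul_one_posDef {m : ℕ} {c : ℝ} (hc : 0 < c) :
    (c • (1 : Matrix (Fin m) (Fin m) ℝ)).PosDef := by
  rw [Matrix.smul_one_eq_diagonal]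
  exact Matrix.posDef_diagonal_iff.mpr fun _ => hc

lemma aux_opNorm_le {p q : ℕ} (B : Matrix (Fin p) (Fin q) ℝ) {c : ℝ} (hc : 0 ≤ c)
    (h : ∀ x : EuclideanSpace ℝ (Fin q),
      ‖(EuclideanSpace.equiv (Fin p) ℝ).symm (B *ᵥ x)‖ ≤ c * ‖x‖) : ‖B‖ ≤ c := by
  rw [Matrix.l2_opNorm_def]
  exact ContinuousLinearMap.opNorm_le_bound _ hc h

lemma aux_eigenvalue_le {k : ℕ} {M : Matrix (Fin k) (Fin k) ℝ} (hM : M.IsHermitian)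
    (i : Fin k) : hM.eigenvalues i ≤ ‖M‖ := by
  have hv := hM.mulVec_eigenvectorBasis i
  have hnv : ‖hM.eigenvectorBasis i‖ = 1 := hM.eigenvectorBasis.orthonormal.1 i
  have h1 := M.l2_opNorm_mulVec (hM.eigenvectorBasis i)
  rw [hnv, mul_one] at h1
  have h2 : (EuclideanSpace.equiv (Fin k) ℝ).symm (M *ᵥ (hM.eigenvectorBasis i)) =
      hM.eigenvalues i • hM.eigenvectorBasis i := by
    ext j
    exact congrFun hv j
  rw [h2, norm_smul, hnv, mul_one] at h1
  exact (le_abs_self _).trans (by simpa using h1)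

lemma aux_det_le {k : ℕ} {M : Matrix (Fin k) (Fin k) ℝ} (hM : M.PosSemidef) :
    M.det ≤ ‖M‖ ^ k := by
  rw [hM.1.det_eq_prod_eigenvalues]
  calc (∏ i, (hM.1.eigenvalues i : ℝ)) ≤ ∏ _i : Fin k, ‖M‖ :=
        Finset.prod_le_prod (fun i _ => hM.eigenvalues_nonneg i)
          (fun i _ => aux_eigenvalue_le hM.1 i)
    _ = ‖M‖ ^ k := by simp [Finset.prod_const]

end Aux

/-- For `A ∈ ℝ^{m×n}`, `μ > 0`, `ν ∈ ℕ` with `det (A Aᵀ) > 0`, the damped pseudoinverse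
with damping `λ² = μ² / det(A Aᵀ)^ν` has (ℓ²-)operator norm at most `‖A‖^{νm}/(2μ)`. -/
theorem damped_pseudoinverse_opNorm_le_of_det_pos
    {m n : ℕ} (A : Matrix (Fin m) (Fin n) ℝ) (μ : ℝ) (hμ : 0 < μ) (ν : ℕ)
    (hdet : 0 < (A * Aᵀ).det)
    (lam : ℝ) (hlam : 0 < lam) (hlam2 : lam ^ 2 = μ ^ 2 / (A * Aᵀ).det ^ ν) :
    ‖Aᵀ * (A * Aᵀ + lam ^ 2 • (1 : Matrix (Fin m) (Fin m) ℝ))⁻¹‖ ≤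
      ‖A‖ ^ (ν * m) / (2 * μ) := by
  set M : Matrix (Fin m) (Fin m) ℝ := A * Aᵀ with hM
  set S : Matrix (Fin m) (Fin m) ℝ := M + lam ^ 2 • 1 with hS
  have hMps : M.PosSemidef := by
    have := Matrix.posSemidef_self_mul_conjTranspose A
    simpa using this
  have hSpd : S.PosDef := Matrix.PosDef.posSemidef_add hMps (aux_smul_one_posDef (by positivity))
  have hSunit : IsUnit S.det := hSpd.det_pos.ne'.isUnit
  have hSS : S * S⁻¹ = 1 := Matrix.mul_nonsing_inv S hSunit
  have hSS' : S⁻¹ * S = 1 := Matrix.nonsing_inv_mul S hSunit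
  have hMsymm : Mᵀ = M := by simp [hM, Matrix.transpose_mul]
  have hSsymm : Sᵀ = S := by simp [hS, Matrix.transpose_add, hMsymm, Matrix.transpose_smul]
  have hSinvsymm : (S⁻¹)ᵀ = S⁻¹ := by rw [Matrix.transpose_nonsing_inv, hSsymm]
  -- the key positive semidefiniteness
  have hDsymm : (M - lam ^ 2 • 1)ᵀ = M - lam ^ 2 • 1 := by
    simp [Matrix.transpose_sub, hMsymm, Matrix.transpose_smul]
  have hkey : S * S - (4 * lam ^ 2) • M = (M - lam ^ 2 • 1) * (M - lam ^ 2 • 1) := by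
    simp only [hS, sub_mul, mul_sub, add_mul, mul_add, smul_mul_assoc, mul_smul_comm,
      one_mul, mul_one, smul_smul]
    module
  have hBtB : (Aᵀ * S⁻¹)ᵀ * (Aᵀ * S⁻¹) = S⁻¹ * (M * S⁻¹) := by
    rw [Matrix.transpose_mul, hSinvsymm, Matrix.transpose_transpose, hM]
    simp [Matrix.mul_assoc]
  have hQ : (1 - (4 * lam ^ 2) • ((Aᵀ * S⁻¹)ᵀ * (Aᵀ * S⁻¹))).PosSemidef := by
    have hid : (1 : Matrix (Fin m) (Fin m) ℝ) - (4 * lam ^ 2) • ((Aᵀ * S⁻¹)ᵀ * (Aᵀ * S⁻¹))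
        = ((M - lam ^ 2 • 1) * S⁻¹)ᵀ * ((M - lam ^ 2 • 1) * S⁻¹) := by
      rw [hBtB, Matrix.transpose_mul, hSinvsymm, hDsymm]
      calc (1 : Matrix (Fin m) (Fin m) ℝ) - (4 * lam ^ 2) • (S⁻¹ * (M * S⁻¹))
          = S⁻¹ * ((S * S - (4 * lam ^ 2) • M) * S⁻¹) := by
            simp only [Matrix.sub_mul, Matrix.mul_sub, Matrix.smul_mul, Matrix.mul_smul]
            rw [Matrix.mul_assoc S S S⁻¹, hSS, mul_one, hSS']
        _ = S⁻¹ * (M - lam ^ 2 • 1) * ((M - lam ^ 2 • 1) * S⁻¹) := by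
            rw [hkey]; simp [Matrix.mul_assoc]
    rw [hid]
    have := Matrix.posSemidef_conjTranspose_mul_self ((M - lam ^ 2 • 1) * S⁻¹)
    simpa using this
  -- quadratic form bound gives the operator norm bound
  have hnormB : ‖Aᵀ * S⁻¹‖ ≤ 1 / (2 * lam) := by
    refine aux_opNorm_le (Aᵀ * S⁻¹) (by positivity) fun x => ?_
    have hxq : ((Aᵀ * S⁻¹) *ᵥ (x : Fin m → ℝ)) ⬝ᵥ ((Aᵀ * S⁻¹) *ᵥ (x : Fin m → ℝ))
        ≤ 1 / (4 * lam ^ 2) * ((x : Fin m → ℝ) ⬝ᵥ (x : Fin m → ℝ)) := by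
      have h0 := hQ.dotProduct_mulVec_nonneg (x : Fin m → ℝ)
      have hrw : (x : Fin m → ℝ) ⬝ᵥ (((Aᵀ * S⁻¹)ᵀ * (Aᵀ * S⁻¹)) *ᵥ (x : Fin m → ℝ))
          = ((Aᵀ * S⁻¹) *ᵥ (x : Fin m → ℝ)) ⬝ᵥ ((Aᵀ * S⁻¹) *ᵥ (x : Fin m → ℝ)) := by
        rw [← Matrix.mulVec_mulVec, Matrix.dotProduct_mulVec, Matrix.vecMul_transpose]
      simp only [star_trivial, Matrix.sub_mulVec, Matrix.one_mulVec, Matrix.smul_mulVec,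
        dotProduct_sub, dotProduct_smul, smul_eq_mul] at h0
      rw [← hrw]
      have h4 : (0:ℝ) < 4 * lam ^ 2 := by positivity
      rw [one_div, inv_mul_eq_div, le_div_iff₀ h4]
      nlinarith [h0]
    -- convert to norms
    have hny : ‖(EuclideanSpace.equiv (Fin n) ℝ).symm ((Aᵀ * S⁻¹) *ᵥ (x : Fin m → ℝ))‖ ^ 2
        = ((Aᵀ * S⁻¹) *ᵥ (x : Fin m → ℝ)) ⬝ᵥ ((Aᵀ * S⁻¹) *ᵥ (x : Fin m → ℝ)) := by
      rw [EuclideanSpace.norm_eq]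
      rw [Real.sq_sqrt (by positivity)]
      simp [dotProduct, sq_abs, pow_two]
    have hnx : ‖x‖ ^ 2 = (x : Fin m → ℝ) ⬝ᵥ (x : Fin m → ℝ) := by
      rw [EuclideanSpace.norm_eq]
      rw [Real.sq_sqrt (by positivity)]
      simp [dotProduct, sq_abs, pow_two]
    have hsq : ‖(EuclideanSpace.equiv (Fin n) ℝ).symm ((Aᵀ * S⁻¹) *ᵥ (x : Fin m → ℝ))‖ ^ 2
        ≤ (1 / (2 * lam) * ‖x‖) ^ 2 := by
      rw [hny, mul_pow, hnx]
      calc ((Aᵀ * S⁻¹) *ᵥ (x : Fin m → ℝ)) ⬝ᵥ ((Aᵀ * S⁻¹) *ᵥ (x : Fin m → ℝ))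
          ≤ 1 / (4 * lam ^ 2) * ((x : Fin m → ℝ) ⬝ᵥ (x : Fin m → ℝ)) := hxq
        _ = (1 / (2 * lam)) ^ 2 * ((x : Fin m → ℝ) ⬝ᵥ (x : Fin m → ℝ)) := by
            rw [div_pow]; ring_nf
    exact (pow_le_pow_iff_left₀ (norm_nonneg _) (by positivity) two_ne_zero).mp hsq
  -- compare `1/(2 lam)` with the right-hand side
  have hdetle : M.det ^ ν ≤ (‖A‖ ^ (ν * m)) ^ 2 := by
    have h1 : M.det ≤ ‖M‖ ^ m := aux_det_le hMps
    have h2 : ‖M‖ = ‖A‖ * ‖A‖ := by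
      have := Matrix.l2_opNorm_conjTranspose_mul_self Aᵀ
      have hAT : (Aᵀ)ᴴ = A := by
        simp [Matrix.conjTranspose, hM]
        rfl
      have hATn : ‖Aᵀ‖ = ‖A‖ := by
        have := Matrix.l2_opNorm_conjTranspose A
        simpa [Matrix.conjTranspose_eq_transpose_of_trivial] using this
      rw [hAT, hATn] at this
      simpa [hM] using this
    calc M.det ^ ν ≤ (‖M‖ ^ m) ^ ν := by
          exact pow_le_pow_left₀ hdet.le h1 ν
      _ = (‖A‖ ^ (ν * m)) ^ 2 := by rw [h2, ← sq]; ring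
  have hμle : μ ≤ lam * ‖A‖ ^ (ν * m) := by
    have hd : (0:ℝ) < M.det ^ ν := pow_pos hdet ν
    have key : μ ^ 2 ≤ (lam * ‖A‖ ^ (ν * m)) ^ 2 := by
      have : lam ^ 2 * M.det ^ ν = μ ^ 2 := by
        rw [hlam2]; field_simp
      calc μ ^ 2 = lam ^ 2 * M.det ^ ν := this.symm
        _ ≤ lam ^ 2 * (‖A‖ ^ (ν * m)) ^ 2 := by
            exact mul_le_mul_of_nonneg_left hdetle (by positivity)
        _ = (lam * ‖A‖ ^ (ν * m)) ^ 2 := by ring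
    exact (pow_le_pow_iff_left₀ hμ.le (by positivity) two_ne_zero).mp key
  refine hnormB.trans ?_
  rw [div_le_div_iff₀ (by positivity) (by positivity)]
  nlinarith [hμle, hlam.le]
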